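/- Let φ : (G′,g′) → (G,g) be a finite harmonic morphism of weighted graphs, let F be a subgraph of G, and let F′ = φ^{-1}(F). Then F′ is a subgraph of G′, the restriction φ|_{F′} : F′ → F (with the restricted degree function and weights) is a finite harmonic morphism, and for every vertex v′ of F′ one has Ram_{φ|_{F′}}(v′) ≥ Ram_φ(v′), where the ramification degrees are computed with the valencies of F′ and F, respectively of G′ and G. In particular, if φ is effective then so is φ|_{F′}. -/

import Mathlib

namespace TropDR

open Finset

/-- `Finset.filter` with classical decidability. -/
noncomputable def cfilter {α : Type*} (p : α → Prop) (s : Finset α) : Finset α :=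
  @Finset.filter α p (Classical.decPred p) s

/-- A graph with legs: a finite set `X` together with an idempotent root map `rt`
and an involution `inv` fixing every root vertex. -/
structure PGraph where
  X : Type
  [fintypeX : Fintype X]
  [decEqX : DecidableEq X]
  rt : X → X
  inv : X → X
  rt_idem : ∀ x, rt (rt x) = rt x
  inv_invol : ∀ x, inv (inv x) = x
  inv_fix_rt : ∀ x, inv (rt x) = rt x

attribute [instance] PGraph.fintypeX PGraph.decEqX

namespace PGraph

variable (G : PGraph)

/-- Vertices are the fixed points (= the image) of the root map. -/
def IsVertex (x : G.X) : Prop := G.rt x = x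

/-- Half-edges are the non-vertices. -/
def IsHalf (x : G.X) : Prop := G.rt x ≠ x

/-- Legs are the `inv`-fixed half-edges. -/
def IsLeg (x : G.X) : Prop := G.IsHalf x ∧ G.inv x = x

/-- Halves of genuine edges: half-edges moved by the involution. -/
def IsEdgeHalf (x : G.X) : Prop := G.IsHalf x ∧ G.inv x ≠ x

noncomputable def vertexSet : Finset G.X := cfilter (fun x => G.IsVertex x) Finset.univ

noncomputable def legSet : Finset G.X := cfilter (fun x => G.IsLeg x) Finset.univ

noncomputable def edgeHalfSet : Finset G.X := cfilter (fun x => G.IsEdgeHalf x) Finset.univ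

/-- Tangent directions at a vertex `v`: half-edges rooted at `v`. -/
noncomputable def tangents (v : G.X) : Finset G.X :=
  cfilter (fun h => G.IsHalf h ∧ G.rt h = v) Finset.univ

noncomputable def valence (v : G.X) : ℕ := (G.tangents v).card

/-- The number of edges: half the number of edge half-edges. -/
noncomputable def numEdges : ℕ := G.edgeHalfSet.card / 2

noncomputable def numLegs : ℕ := G.legSet.card

noncomputable def numVertices : ℕ := G.vertexSet.card

/-- Connectedness: the equivalence relation generated by `x ∼ rt x` and `x ∼ inv x`
has a single class (and `X` is nonempty). -/
def Connected : Prop :=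
  Nonempty G.X ∧ ∀ x y : G.X, Relation.EqvGen (fun a b => G.rt a = b ∨ G.inv a = b) x y

/-- A subgraph: a subset of `X` closed under the root map and the involution. -/
def IsSubgraph (F : Finset G.X) : Prop :=
  (∀ x ∈ F, G.rt x ∈ F) ∧ (∀ x ∈ F, G.inv x ∈ F)

/-- Valency of `v` inside a subgraph `F`. -/
noncomputable def valIn (F : Finset G.X) (v : G.X) : ℕ := (G.tangents v ∩ F).card

end PGraph

/-- A morphism of graphs: commutes with the root maps and involutions,
and maps no edge into a leg. -/
structure GraphHom (G' G : PGraph) where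
  toFun : G'.X → G.X
  map_rt : ∀ x, toFun (G'.rt x) = G.rt (toFun x)
  map_inv : ∀ x, toFun (G'.inv x) = G.inv (toFun x)
  edge_not_leg : ∀ h, G'.IsEdgeHalf h → ¬ G.IsLeg (toFun h)

/-- A harmonic morphism of graphs: a graph morphism together with a degree function. -/
structure HarmonicHom (G' G : PGraph) extends GraphHom G' G where
  deg : G'.X → ℕ
  deg_edge : ∀ h, G'.IsEdgeHalf h → deg (G'.inv h) = deg h
  deg_zero_iff : ∀ h, G'.IsHalf h → (deg h = 0 ↔ G.IsVertex (toFun h))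
  harmonic : ∀ v', G'.IsVertex v' → ∀ h, G.IsHalf h → G.rt h = toFun v' →
    deg v' = ∑ h' ∈ cfilter (fun h' => toFun h' = h) (G'.tangents v'), deg h'

namespace HarmonicHom

variable {G' G : PGraph} (φ : HarmonicHom G' G)

/-- A harmonic morphism is finite if it has positive degree on every half-edge. -/
def Finite : Prop := ∀ h, G'.IsHalf h → 0 < φ.deg h

/-- The sum of the degrees over the vertex fiber of `v`. -/
noncomputable def vertexFiberDeg (v : G.X) : ℕ :=
  ∑ v' ∈ cfilter (fun v' => φ.toFun v' = v) G'.vertexSet, φ.deg v'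

end HarmonicHom

/-- A weighted graph: a graph together with a genus function on (all elements;
only the values at vertices are relevant). -/
structure WGraph extends PGraph where
  gw : X → ℕ

namespace WGraph

variable (G : WGraph)

/-- The genus of a (connected) weighted graph. -/
noncomputable def genus : ℤ :=
  (G.toPGraph.numEdges : ℤ) - (G.toPGraph.numVertices : ℤ) + 1 +
    ∑ v ∈ G.toPGraph.vertexSet, (G.gw v : ℤ)

/-- The Euler characteristic of a vertex. -/
noncomputable def chiV (v : G.X) : ℤ :=
  2 - 2 * (G.gw v : ℤ) - (G.toPGraph.valence v : ℤ)

/-- The Euler characteristic of a (connected) weighted graph. -/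
noncomputable def chi : ℤ := 2 - 2 * G.genus - (G.toPGraph.numLegs : ℤ)

end WGraph

/-- The ramification degree of a (finite) harmonic morphism of weighted graphs at `v'`. -/
noncomputable def ram {G' G : WGraph} (φ : HarmonicHom G'.toPGraph G.toPGraph) (v' : G'.X) : ℤ :=
  (φ.deg v' : ℤ) * G.chiV (φ.toFun v') - G'.chiV v'

def Unramified {G' G : WGraph} (φ : HarmonicHom G'.toPGraph G.toPGraph) : Prop :=
  ∀ v', G'.toPGraph.IsVertex v' → ram φ v' = 0

def Effective {G' G : WGraph} (φ : HarmonicHom G'.toPGraph G.toPGraph) : Prop :=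
  ∀ v', G'.toPGraph.IsVertex v' → 0 ≤ ram φ v'

/-- The graph structure induced on a subgraph `F` of `G`. -/
noncomputable def PGraph.restrict (G : PGraph) (F : Finset G.X) (hF : G.IsSubgraph F) :
    PGraph where
  X := { x : G.X // x ∈ F }
  rt := fun x => ⟨G.rt x.1, hF.1 x.1 x.2⟩
  inv := fun x => ⟨G.inv x.1, hF.2 x.1 x.2⟩
  rt_idem := fun x => Subtype.ext (G.rt_idem x.1)
  inv_invol := fun x => Subtype.ext (G.inv_invol x.1)
  inv_fix_rt := fun x => Subtype.ext (G.inv_fix_rt x.1)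

/-- The weighted graph structure induced on a subgraph `F` of a weighted graph `G`. -/
noncomputable def WGraph.wrestrict (G : WGraph) (F : Finset G.X)
    (hF : G.toPGraph.IsSubgraph F) : WGraph where
  toPGraph := G.toPGraph.restrict F hF
  gw := fun x => G.gw x.1

section Aux3

lemma mem_cfilter {α : Type*} {p : α → Prop} {s : Finset α} {x : α} :
    x ∈ cfilter p s ↔ x ∈ s ∧ p x :=
  @Finset.mem_filter _ _ (Classical.decPred p) _ _

variable {G : PGraph} {F : Finset G.X} (hFsub : G.IsSubgraph F)

lemma restrict_rt (x : (G.restrict F hFsub).X) :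
    ((G.restrict F hFsub).rt x).1 = G.rt x.1 := rfl

lemma restrict_inv (x : (G.restrict F hFsub).X) :
    ((G.restrict F hFsub).inv x).1 = G.inv x.1 := rfl

lemma restrict_isVertex (x : (G.restrict F hFsub).X) :
    (G.restrict F hFsub).IsVertex x ↔ G.IsVertex x.1 := by
  simp [PGraph.IsVertex, PGraph.restrict, Subtype.ext_iff]
  exact Subtype.ext_iff

lemma restrict_isHalf (x : (G.restrict F hFsub).X) :
    (G.restrict F hFsub).IsHalf x ↔ G.IsHalf x.1 := by
  simp [PGraph.IsHalf, PGraph.restrict, Subtype.ext_iff]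
  exact not_congr Subtype.ext_iff

lemma restrict_isLeg (x : (G.restrict F hFsub).X) :
    (G.restrict F hFsub).IsLeg x ↔ G.IsLeg x.1 := by
  simp [PGraph.IsLeg, PGraph.IsHalf, PGraph.restrict, Subtype.ext_iff]
  exact and_congr (not_congr Subtype.ext_iff) Subtype.ext_iff

lemma restrict_isEdgeHalf (x : (G.restrict F hFsub).X) :
    (G.restrict F hFsub).IsEdgeHalf x ↔ G.IsEdgeHalf x.1 := by
  simp [PGraph.IsEdgeHalf, PGraph.IsHalf, PGraph.restrict, Subtype.ext_iff]
  exact and_congr (not_congr Subtype.ext_iff) (not_congr Subtype.ext_iff)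

lemma mem_tangents {v h : G.X} :
    h ∈ G.tangents v ↔ G.IsHalf h ∧ G.rt h = v := by
  simp [PGraph.tangents, mem_cfilter]

lemma mem_restrict_tangents (v x : (G.restrict F hFsub).X) :
    x ∈ (G.restrict F hFsub).tangents v ↔ G.IsHalf x.1 ∧ G.rt x.1 = v.1 := by
  rw [mem_tangents, restrict_isHalf]
  constructor
  · rintro ⟨h1, h2⟩; exact ⟨h1, congrArg Subtype.val h2⟩
  · rintro ⟨h1, h2⟩; exact ⟨h1, Subtype.ext h2⟩

/-- The valence inside the restricted graph, computed in `G`. -/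
lemma restrict_valence (v : (G.restrict F hFsub).X) :
    (G.restrict F hFsub).valence v
      = (Finset.filter (fun h => h ∈ F) (G.tangents v.1)).card := by
  classical
  unfold PGraph.valence
  apply Finset.card_bij (fun (x : (G.restrict F hFsub).X) _ => x.1)
  · intro a ha
    rw [mem_restrict_tangents] at ha
    simp only [Finset.mem_filter, mem_tangents]
    exact ⟨ha, a.2⟩
  · intro a _ b _ h; exact Subtype.ext h
  · intro b hb
    simp only [Finset.mem_filter, mem_tangents] at hb
    exact ⟨⟨b, hb.2⟩, (mem_restrict_tangents hFsub v ⟨b, hb.2⟩).2 hb.1, rfl⟩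

lemma isHalf_iff_not_isVertex (x : G.X) : G.IsHalf x ↔ ¬ G.IsVertex x := Iff.rfl

end Aux3

/-- Let `φ : (G',g') → (G,g)` be a finite harmonic morphism of weighted
graphs, `F` a subgraph of `G` and `F' = φ⁻¹(F)`.  Then `F'` is a subgraph of `G'`, the
restriction `φ|_{F'} : F' → F` (with restricted degrees and weights) is a finite harmonic
morphism, and `Ram_{φ|_{F'}}(v') ≥ Ram_φ(v')` for every vertex `v'` of `F'`.
In particular, if `φ` is effective then so is `φ|_{F'}`. -/
theorem restriction_to_preimage_subgraph
    (G' G : WGraph) (φ : HarmonicHom G'.toPGraph G.toPGraph) (hfin : φ.Finite)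
    (F : Finset G.X) (hF : G.toPGraph.IsSubgraph F) :
    ∃ hF' : G'.toPGraph.IsSubgraph (cfilter (fun x => φ.toFun x ∈ F) Finset.univ),
    ∃ ψ : HarmonicHom
        ((G'.wrestrict (cfilter (fun x => φ.toFun x ∈ F) Finset.univ) hF').toPGraph)
        ((G.wrestrict F hF).toPGraph),
      (∀ x, (ψ.toFun x).1 = φ.toFun x.1) ∧
      (∀ x, ψ.deg x = φ.deg x.1) ∧
      ψ.Finite ∧
      (∀ v', (G'.wrestrict (cfilter (fun x => φ.toFun x ∈ F) Finset.univ)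
          hF').toPGraph.IsVertex v' → ram φ v'.1 ≤ ram ψ v') ∧
      (Effective φ → Effective ψ) := by
  classical
  set F' : Finset G'.X := cfilter (fun x => φ.toFun x ∈ F) Finset.univ with hF'def
  have memF' : ∀ x : G'.X, x ∈ F' ↔ φ.toFun x ∈ F := by
    intro x; simp [hF'def, mem_cfilter]
  have hF' : G'.toPGraph.IsSubgraph F' := by
    constructor <;> intro x hx <;> rw [memF'] at hx ⊢
    · rw [φ.map_rt]; exact hF.1 _ hx
    · rw [φ.map_inv]; exact hF.2 _ hx
  refine ⟨hF', ?_⟩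
  have main : ∃ ψ : HarmonicHom
        ((G'.wrestrict F' hF').toPGraph) ((G.wrestrict F hF).toPGraph),
      (∀ x, (ψ.toFun x).1 = φ.toFun x.1) ∧
      (∀ x, ψ.deg x = φ.deg x.1) ∧
      ψ.Finite ∧
      (∀ v', (G'.wrestrict F' hF').toPGraph.IsVertex v' → ram φ v'.1 ≤ ram ψ v') := by
    set H' := (G'.wrestrict F' hF').toPGraph with hH'
    set H := (G.wrestrict F hF).toPGraph with hH
    have hH'r : H' = G'.toPGraph.restrict F' hF' := rfl
    have hHr : H = G.toPGraph.restrict F hF := rfl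
    have mapmem : ∀ x : H'.X, φ.toFun x.1 ∈ F := fun x => (memF' x.1).1 x.2
    refine ⟨{ toFun := fun x => ⟨φ.toFun x.1, mapmem x⟩
              map_rt := fun x => Subtype.ext (φ.map_rt x.1)
              map_inv := fun x => Subtype.ext (φ.map_inv x.1)
              edge_not_leg := ?_
              deg := fun x => φ.deg x.1
              deg_edge := ?_
              deg_zero_iff := ?_
              harmonic := ?_ }, fun _ => rfl, fun _ => rfl, ?_, ?_⟩
    · intro h hh
      have hh1 := (restrict_isEdgeHalf hF' h).mp hh
      exact fun hleg => φ.edge_not_leg h.1 hh1 ((restrict_isLeg hF _).mp hleg)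
    · intro h hh
      exact φ.deg_edge h.1 ((restrict_isEdgeHalf hF' h).mp hh)
    · intro h hh
      exact (φ.deg_zero_iff h.1 ((restrict_isHalf hF' h).mp hh)).trans
        (restrict_isVertex hF ⟨φ.toFun h.1, mapmem h⟩).symm
    · -- harmonicity
      intro v' hv' h hh hrt
      have hv'1 := (restrict_isVertex hF' v').mp hv'
      have hh1 := (restrict_isHalf hF h).mp hh
      have hrt1 : G.toPGraph.rt h.1 = φ.toFun v'.1 := congrArg Subtype.val hrt
      refine (φ.harmonic v'.1 hv'1 h.1 hh1 hrt1).trans ?_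
      refine (Finset.sum_bij (fun (x : H'.X) _ => x.1) ?_ ?_ ?_ ?_).symm
      · intro a ha
        rw [mem_cfilter] at ha ⊢
        have hat := (mem_restrict_tangents hF' v' a).mp ha.1
        exact ⟨mem_tangents.mpr hat, congrArg Subtype.val ha.2⟩
      · intro a _ b _ hab; exact Subtype.ext hab
      · intro b hb
        rw [mem_cfilter] at hb
        have hbt := mem_tangents.mp hb.1
        have hbF : b ∈ F' := by rw [memF', hb.2]; exact h.2
        refine ⟨⟨b, hbF⟩, ?_, rfl⟩
        apply mem_cfilter.mpr
        exact ⟨(mem_restrict_tangents hF' v' ⟨b, hbF⟩).mpr hbt, Subtype.ext hb.2⟩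
      · intro a _; rfl
    · -- finiteness
      intro h hh
      exact hfin h.1 ((restrict_isHalf hF' h).mp hh)
    · -- ramification inequality
      intro v' hv'
      have hv'1 := (restrict_isVertex hF' v').mp hv'
      have hvv : G'.toPGraph.rt v'.1 = v'.1 := hv'1
      set v : G.X := φ.toFun v'.1 with hv
      -- valences
      have hvalG' : (G'.toPGraph.valence v'.1 : ℤ)
          = (Finset.filter (fun h => h ∈ F') (G'.toPGraph.tangents v'.1)).card
            + (Finset.filter (fun h => h ∉ F') (G'.toPGraph.tangents v'.1)).card := by
        rw [← Nat.cast_add, Finset.card_filter_add_card_filter_not]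
        rfl
      have hvalG : (G.toPGraph.valence v : ℤ)
          = (Finset.filter (fun h => h ∈ F) (G.toPGraph.tangents v)).card
            + (Finset.filter (fun h => h ∉ F) (G.toPGraph.tangents v)).card := by
        rw [← Nat.cast_add, Finset.card_filter_add_card_filter_not]
        rfl
      -- key counting inequality
      set s : Finset G'.X := Finset.filter (fun h => h ∉ F') (G'.toPGraph.tangents v'.1)
        with hs
      have himage : s.image φ.toFun ⊆
          Finset.filter (fun h => h ∉ F) (G.toPGraph.tangents v) := by
        intro b hb
        rw [Finset.mem_image] at hb
        obtain ⟨a, ha, rfl⟩ := hb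
        rw [hs, Finset.mem_filter, mem_tangents] at ha
        rw [Finset.mem_filter, mem_tangents]
        have hah : G'.toPGraph.IsHalf a := ha.1.1
        have hhalf : G.toPGraph.IsHalf (φ.toFun a) := by
          rw [isHalf_iff_not_isVertex]
          intro hvert
          have h0 := (φ.deg_zero_iff a hah).2 hvert
          have h1 := hfin a hah
          omega
        refine ⟨⟨hhalf, ?_⟩, ?_⟩
        · rw [← φ.map_rt, ha.1.2]
        · intro hmem; exact ha.2 ((memF' a).2 hmem)
      have hfiber : ∀ b ∈ s.image φ.toFun,
          (s.filter (fun x => φ.toFun x = b)).card ≤ φ.deg v'.1 := by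
        intro b hb
        have hbmem := himage hb
        rw [Finset.mem_filter, mem_tangents] at hbmem
        rw [φ.harmonic v'.1 hv'1 b hbmem.1.1 hbmem.1.2]
        calc (s.filter (fun x => φ.toFun x = b)).card
            ≤ (cfilter (fun h' => φ.toFun h' = b) (G'.toPGraph.tangents v'.1)).card := by
              apply Finset.card_le_card
              intro x hx
              rw [Finset.mem_filter] at hx
              rw [mem_cfilter]
              exact ⟨Finset.mem_of_mem_filter x hx.1, hx.2⟩
          _ ≤ ∑ h' ∈ cfilter (fun h' => φ.toFun h' = b) (G'.toPGraph.tangents v'.1),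
                φ.deg h' := by
              rw [Finset.card_eq_sum_ones]
              apply Finset.sum_le_sum
              intro i hi
              rw [mem_cfilter, mem_tangents] at hi
              exact hfin i hi.1.1
      have hkey : s.card ≤ φ.deg v'.1 *
          (Finset.filter (fun h => h ∉ F) (G.toPGraph.tangents v)).card := by
        calc s.card ≤ φ.deg v'.1 * (s.image φ.toFun).card :=
              Finset.card_le_mul_card_image s _ hfiber
          _ ≤ _ := Nat.mul_le_mul_left _ (Finset.card_le_card himage)
      have hkeyZ : (s.card : ℤ) ≤ (φ.deg v'.1 : ℤ) *
          (Finset.filter (fun h => h ∉ F) (G.toPGraph.tangents v)).card := by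
        exact_mod_cast hkey
      -- restricted valences
      have hvalF' : ((G'.wrestrict F' hF').toPGraph.valence v' : ℤ)
          = (Finset.filter (fun h => h ∈ F') (G'.toPGraph.tangents v'.1)).card := by
        exact_mod_cast restrict_valence hF' v'
      have hvalF : ((G.wrestrict F hF).toPGraph.valence
            (⟨v, mapmem v'⟩ : {x : G.X // x ∈ F}) : ℤ)
          = (Finset.filter (fun h => h ∈ F) (G.toPGraph.tangents v)).card := by
        exact_mod_cast restrict_valence hF (⟨v, mapmem v'⟩ : {x : G.X // x ∈ F})
      -- unfold the ramification degrees
      show (φ.deg v'.1 : ℤ) * (2 - 2 * (G.gw v : ℤ) - (G.toPGraph.valence v : ℤ))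
            - (2 - 2 * (G'.gw v'.1 : ℤ) - (G'.toPGraph.valence v'.1 : ℤ))
          ≤ (φ.deg v'.1 : ℤ)
              * (2 - 2 * (G.gw v : ℤ)
                - ((G.wrestrict F hF).toPGraph.valence ⟨v, mapmem v'⟩ : ℤ))
            - (2 - 2 * (G'.gw v'.1 : ℤ)
                - ((G'.wrestrict F' hF').toPGraph.valence v' : ℤ))
      rw [hvalF', hvalF, hvalG', hvalG]
      have hsc : (s.card : ℤ)
          = ((Finset.filter (fun h => h ∉ F') (G'.toPGraph.tangents v'.1)).card : ℤ) := by
        rw [hs]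
      rw [← hsc]

      nlinarith [hkeyZ]
  obtain ⟨ψ, h1, h2, h3, h4⟩ := main
  refine ⟨ψ, h1, h2, h3, h4, fun heff v' hv' => ?_⟩
  exact le_trans (heff v'.1 ((restrict_isVertex hF' v').1 hv')) (h4 v' hv')

end TropDR
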